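/- (Theorem 2, implication 3)⇒1) for f ∈ L_{1,Y}) Let s ≥ 1 be a real number, and suppose that f̂(k) = 0 for every k ∈ ℤ^d that does not lie in Y = ℤ^d_+ ∪ ℤ^d_− (that is, unless either k_j ≥ 0 for all j, or k_j < 0 for all j). If D^{(s−1)}(h) := (∑_{|k|₁≥1} |k|₁^{(s−1)p} |f̂(k)|^p · |1 − e^{i h σ(k)}|^p)^{1/p}, with σ(k) = k_1 + ⋯ + k_d, satisfies D^{(s−1)}(h) = O(ω(|h|)) as h → 0, then E_P(ρ) := (∑_{|k|₁≥1} (1 − ρ^{|k|₁^s})^p |f̂(k)|^p)^{1/p} satisfies E_P(ρ) = O(ω(1−ρ)) as ρ→1⁻. -/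

import Mathlib

open scoped Real ENNReal
open MeasureTheory

def norm1 {d : ℕ} (k : Fin d → ℤ) : ℕ := ∑ j, (k j).natAbs

def diagSum {d : ℕ} (k : Fin d → ℤ) : ℤ := ∑ j, k j

noncomputable def fCoeff {d : ℕ} (f : (Fin d → ℝ) → ℂ) (k : Fin d → ℤ) : ℂ :=
  ∫ x in Set.Icc (0 : Fin d → ℝ) (fun _ => 2 * Real.pi),
    f x * Complex.exp (-Complex.I * (∑ j, (k j : ℂ) * (x j : ℂ)))

lemma my_re_im (θ : ℝ) : (1 - Complex.exp ((θ:ℂ) * Complex.I)).re = 1 - Real.cos θ ∧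
    (1 - Complex.exp ((θ:ℂ) * Complex.I)).im = - Real.sin θ := by
  rw [Complex.exp_mul_I]
  simp [Complex.cos_ofReal_re, Complex.sin_ofReal_re]

lemma my_abs_lb_sin (θ : ℝ) : |Real.sin θ| ≤ ‖1 - Complex.exp ((θ:ℂ) * Complex.I)‖ := by
  have h := (my_re_im θ).2
  calc |Real.sin θ| = |(1 - Complex.exp ((θ:ℂ) * Complex.I)).im| := by rw [h, abs_neg]
  _ ≤ _ := Complex.abs_im_le_norm _

lemma my_abs_lb_cos (θ : ℝ) : 1 - Real.cos θ ≤ ‖1 - Complex.exp ((θ:ℂ) * Complex.I)‖ := by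
  have h := (my_re_im θ).1
  calc 1 - Real.cos θ ≤ |(1 - Complex.exp ((θ:ℂ) * Complex.I)).re| := by rw [h]; exact le_abs_self _
  _ ≤ _ := Complex.abs_re_le_norm _

lemma my_exp_lb (h : ℝ) (σ : ℤ) :
    |Real.sin (h * ((σ.natAbs : ℕ) : ℝ))| ≤ ‖1 - Complex.exp (Complex.I * (h:ℂ) * (σ:ℂ))‖ ∧
    1 - Real.cos (h * ((σ.natAbs : ℕ) : ℝ)) ≤ ‖1 - Complex.exp (Complex.I * (h:ℂ) * (σ:ℂ))‖ := by
  have hrw : Complex.I * (h:ℂ) * (σ:ℂ) = ((h * (σ:ℝ) : ℝ):ℂ) * Complex.I := by push_cast; ring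
  have habs : (((σ.natAbs : ℕ)) : ℝ) = |(σ:ℝ)| := by
    rw [Nat.cast_natAbs, Int.cast_abs]
  rw [hrw, habs]
  rcases le_or_gt 0 ((σ:ℝ)) with h1 | h1
  · rw [abs_of_nonneg h1]; exact ⟨my_abs_lb_sin _, my_abs_lb_cos _⟩
  · rw [abs_of_neg h1]
    constructor
    · have h2 := my_abs_lb_sin (h * (σ:ℝ))
      rw [show h * -(σ:ℝ) = -(h*(σ:ℝ)) by ring, Real.sin_neg, abs_neg]; exact h2
    · have h2 := my_abs_lb_cos (h * (σ:ℝ))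
      rw [show h * -(σ:ℝ) = -(h*(σ:ℝ)) by ring, Real.cos_neg]; exact h2

lemma my_diag {d : ℕ} {k : Fin d → ℤ} (hk : (∀ j, 0 ≤ k j) ∨ (∀ j, k j < 0)) :
    (diagSum k).natAbs = norm1 k := by
  rcases hk with hk | hk
  · have h1 : diagSum k = ((norm1 k : ℕ) : ℤ) := by
      unfold diagSum norm1
      push_cast
      exact Finset.sum_congr rfl fun j _ => (abs_of_nonneg (hk j)).symm
    rw [h1, Int.natAbs_natCast]
  · have h1 : diagSum k = -((norm1 k : ℕ) : ℤ) := by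
      unfold diagSum norm1
      push_cast
      rw [← Finset.sum_neg_distrib]
      exact Finset.sum_congr rfl fun j _ => by
        rw [abs_of_neg (hk j), neg_neg]
    rw [h1, Int.natAbs_neg, Int.natAbs_natCast]

lemma my_key {d : ℕ} {f : (Fin d → ℝ) → ℂ}
    (hY : ∀ k : Fin d → ℤ, ¬ ((∀ j, 0 ≤ k j) ∨ (∀ j, k j < 0)) → fCoeff f k = 0)
    (k : Fin d → ℤ) (h x c : ℝ) {s : ℝ} (hc : 0 ≤ c)
    (hb : x ≤ c * (((norm1 k : ℝ)) ^ (s-1) * |Real.sin (h * (norm1 k : ℝ))|) ∨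
          x ≤ c * (((norm1 k : ℝ)) ^ (s-1) * (1 - Real.cos (h * (norm1 k : ℝ))))) :
    x * ‖fCoeff f k‖ ≤
      c * (((norm1 k : ℝ)) ^ (s-1) * ‖fCoeff f k‖ *
        ‖1 - Complex.exp (Complex.I * (h:ℂ) * ((diagSum k : ℤ) : ℂ))‖) := by
  by_cases hf : fCoeff f k = 0
  · simp [hf]
  · have hkY : (∀ j, 0 ≤ k j) ∨ (∀ j, k j < 0) := by
      by_contra hn; exact hf (hY k hn)
    have hm : (((diagSum k).natAbs : ℕ) : ℝ) = (norm1 k : ℝ) := by rw [my_diag hkY]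
    have hlb := my_exp_lb h (diagSum k)
    rw [hm] at hlb
    have hA : (0:ℝ) ≤ ‖fCoeff f k‖ := norm_nonneg _
    have hr : (0:ℝ) ≤ ((norm1 k : ℝ)) ^ (s-1) := Real.rpow_nonneg (Nat.cast_nonneg _) _
    have hx' : x ≤ c * (((norm1 k : ℝ)) ^ (s-1) *
        ‖1 - Complex.exp (Complex.I * (h:ℂ) * ((diagSum k : ℤ) : ℂ))‖) := by
      rcases hb with hb | hb
      · exact hb.trans (by gcongr; exact hlb.1)
      · exact hb.trans (by gcongr; exact hlb.2)
    calc x * ‖fCoeff f k‖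
        ≤ (c * (((norm1 k : ℝ)) ^ (s-1) *
            ‖1 - Complex.exp (Complex.I * (h:ℂ) * ((diagSum k : ℤ) : ℂ))‖)) *
          ‖fCoeff f k‖ := mul_le_mul_of_nonneg_right hx' hA
      _ = c * (((norm1 k : ℝ)) ^ (s-1) * ‖fCoeff f k‖ *
          ‖1 - Complex.exp (Complex.I * (h:ℂ) * ((diagSum k : ℤ) : ℂ))‖) := by ring

lemma my_sum_rpow_le {ι : Type*} (f : ι → ℝ≥0∞) {r : ℝ} (hr0 : 0 < r) (hr1 : r ≤ 1)
    (s : Finset ι) : (∑ i ∈ s, f i) ^ r ≤ ∑ i ∈ s, f i ^ r := by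
  classical
  induction s using Finset.cons_induction with
  | empty => simp [ENNReal.zero_rpow_of_pos hr0]
  | cons a s ha ih =>
      rw [Finset.sum_cons, Finset.sum_cons]
      exact (ENNReal.rpow_add_le_add_rpow _ _ hr0.le hr1).trans (by gcongr)

lemma my_tsum_rpow_le {ι : Type*} (f : ι → ℝ≥0∞) {r : ℝ} (hr0 : 0 < r) (hr1 : r ≤ 1) :
    (∑' i, f i) ^ r ≤ ∑' i, f i ^ r := by
  have h1 : Filter.Tendsto (fun s : Finset ι => (∑ i ∈ s, f i) ^ r) Filter.atTop
      (nhds ((∑' i, f i) ^ r)) :=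
    (ENNReal.continuous_rpow_const.tendsto _).comp ENNReal.summable.hasSum
  refine le_of_tendsto h1 (Filter.Eventually.of_forall fun s => ?_)
  exact (my_sum_rpow_le f hr0 hr1 s).trans (ENNReal.sum_le_tsum s)

lemma my_dyadic (M : ℕ) (hM : 1 ≤ M) {m : ℕ} (hm : M < m) :
    ∃! j : ℕ, M * 2 ^ j < m ∧ m ≤ M * 2 ^ (j + 1) := by
  have huniq : ∀ j j' : ℕ, (M * 2 ^ j < m ∧ m ≤ M * 2 ^ (j + 1)) →
      (M * 2 ^ j' < m ∧ m ≤ M * 2 ^ (j' + 1)) → j = j' := by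
    intro j j' hj hj'
    by_contra hne
    rcases Nat.lt_or_ge j j' with h | h
    · have : M * 2 ^ (j + 1) ≤ M * 2 ^ j' :=
        Nat.mul_le_mul_left M (Nat.pow_le_pow_right (by norm_num) h)
      omega
    · have h' : j' < j := by omega
      have : M * 2 ^ (j' + 1) ≤ M * 2 ^ j :=
        Nat.mul_le_mul_left M (Nat.pow_le_pow_right (by norm_num) h')
      omega
  have key : M * 2 ^ Nat.log 2 ((m - 1) / M) < m ∧ m ≤ M * 2 ^ (Nat.log 2 ((m - 1) / M) + 1) := by
    have h1 : 1 ≤ (m - 1) / M := Nat.one_le_div_iff (by omega) |>.2 (by omega)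
    have h2 : 2 ^ Nat.log 2 ((m - 1) / M) ≤ (m - 1) / M := Nat.pow_log_le_self 2 (by omega)
    have h3 : (m - 1) / M < 2 ^ (Nat.log 2 ((m - 1) / M) + 1) := Nat.lt_pow_succ_log_self (by norm_num) _
    have h4 : M * 2 ^ Nat.log 2 ((m - 1) / M) ≤ m - 1 := by
      calc M * 2 ^ Nat.log 2 ((m - 1) / M) ≤ M * ((m - 1) / M) := Nat.mul_le_mul_left M h2
      _ ≤ m - 1 := Nat.mul_div_le _ _
    have h5 : m - 1 < M * 2 ^ (Nat.log 2 ((m - 1) / M) + 1) := by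
      have hd := Nat.div_add_mod (m - 1) M
      have hr : (m - 1) % M < M := Nat.mod_lt _ (by omega)
      have h6 : m - 1 < M * ((m - 1) / M + 1) := by nlinarith [hd, hr]
      calc m - 1 < M * ((m - 1) / M + 1) := h6
      _ ≤ M * 2 ^ (Nat.log 2 ((m - 1) / M) + 1) := Nat.mul_le_mul_left M (by omega)
    omega
  exact ⟨Nat.log 2 ((m - 1) / M), key, fun j' hj' => huniq _ _ hj' key⟩

set_option maxHeartbeats 1000000 in
lemma my_Bsum (ω : ℝ → ℝ) (hω' : ∀ a b : ℝ, 0 ≤ a → a ≤ b → b ≤ 1 → ω a ≤ ω b)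
    (hωnn : ∀ t : ℝ, 0 ≤ t → t ≤ 1 → 0 ≤ ω t)
    {C₀ : ℝ} {n : ℕ} (hn1 : 1 ≤ n)
    (hBn : (∑' v : ℕ, ENNReal.ofReal (ω (1 / ((n : ℝ) + 1 + (v : ℝ)) ) / ((n : ℝ) + 1 + (v : ℝ))))
      ≤ ENNReal.ofReal (C₀ * ω (1 / (n : ℝ)))) :
    ∑' j : ℕ, ENNReal.ofReal (ω (1/((n:ℝ)*2^(j+1))))
      ≤ 2 * ENNReal.ofReal (C₀ * ω (1/(n:ℝ))) := by
  have hn0R : (0:ℝ) < (n:ℝ) := by exact_mod_cast Nat.lt_of_lt_of_le Nat.zero_lt_one hn1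

  have hA : ∀ j : ℕ, ENNReal.ofReal (ω (1/((n:ℝ)*2^(j+1)))) ≤
      2 * ∑' u : ℕ, (if n*2^j < u ∧ u ≤ n*2^(j+1) then ENNReal.ofReal (ω (1/(u:ℝ))/(u:ℝ)) else 0) := by
    intro j
    have hunn : ∀ u ∈ Finset.Ioc (n*2^j) (n*2^(j+1)), 0 ≤ ω (1/(u:ℝ))/(u:ℝ) := by
      intro u hu
      obtain ⟨h1, h2⟩ := Finset.mem_Ioc.1 hu
      have hpos : 0 < n*2^j := by positivity
      have hu1 : 1 ≤ u := by omega
      have hu1R : (1:ℝ) ≤ (u:ℝ) := by exact_mod_cast hu1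
      have hu0R : (0:ℝ) < (u:ℝ) := by linarith
      exact div_nonneg (hωnn _ (by positivity) (by rw [div_le_one hu0R]; exact hu1R)) hu0R.le
    have hts : (∑' u : ℕ, (if n*2^j < u ∧ u ≤ n*2^(j+1) then ENNReal.ofReal (ω (1/(u:ℝ))/(u:ℝ)) else 0))
        = ∑ u ∈ Finset.Ioc (n*2^j) (n*2^(j+1)), ENNReal.ofReal (ω (1/(u:ℝ))/(u:ℝ)) := by
      rw [tsum_eq_sum (s := Finset.Ioc (n*2^j) (n*2^(j+1)))
        (fun u hu => if_neg (fun hcc => hu (Finset.mem_Ioc.2 hcc)))]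
      exact Finset.sum_congr rfl fun u hu => if_pos (Finset.mem_Ioc.1 hu)
    rw [hts, ← ENNReal.ofReal_sum_of_nonneg hunn,
      show (2:ℝ≥0∞) = ENNReal.ofReal 2 from (ENNReal.ofReal_ofNat 2).symm,
      ← ENNReal.ofReal_mul (by norm_num)]
    apply ENNReal.ofReal_le_ofReal
    have hX0 : (0:ℝ) < (n:ℝ)*2^(j+1) := by positivity
    have hper : ∀ u ∈ Finset.Ioc (n*2^j) (n*2^(j+1)),
        ω (1/((n:ℝ)*2^(j+1)))/((n:ℝ)*2^(j+1)) ≤ ω (1/(u:ℝ))/(u:ℝ) := by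
      intro u hu
      obtain ⟨h1, h2⟩ := Finset.mem_Ioc.1 hu
      have hpos : 0 < n*2^j := by positivity
      have hu1 : 1 ≤ u := by omega
      have hu1R : (1:ℝ) ≤ (u:ℝ) := by exact_mod_cast hu1
      have hu0R : (0:ℝ) < (u:ℝ) := by linarith
      have huc : (u:ℝ) ≤ (n:ℝ)*2^(j+1) := by exact_mod_cast h2
      have hωu : ω (1/((n:ℝ)*2^(j+1))) ≤ ω (1/(u:ℝ)) :=
        hω' _ _ (by positivity) (one_div_le_one_div_of_le hu0R huc)
          (by rw [div_le_one hu0R]; exact hu1R)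
      have hωu0 : 0 ≤ ω (1/(u:ℝ)) :=
        hωnn _ (by positivity) (by rw [div_le_one hu0R]; exact hu1R)
      exact div_le_div₀ hωu0 hωu hu0R huc
    have hcs := Finset.card_nsmul_le_sum (Finset.Ioc (n*2^j) (n*2^(j+1)))
      (fun u => ω (1/(u:ℝ))/(u:ℝ)) (ω (1/((n:ℝ)*2^(j+1)))/((n:ℝ)*2^(j+1))) hper
    have hcard : (Finset.Ioc (n*2^j) (n*2^(j+1))).card = n*2^j := by
      rw [Nat.card_Ioc]
      have h2 : n*2^(j+1) = 2*(n*2^j) := by ring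
      omega
    rw [hcard, nsmul_eq_mul] at hcs
    have hcast : ((n*2^j : ℕ):ℝ) = (n:ℝ)*2^j := by push_cast; ring
    rw [hcast] at hcs
    have heq : (n:ℝ)*2^j * (ω (1/((n:ℝ)*2^(j+1)))/((n:ℝ)*2^(j+1))) = ω (1/((n:ℝ)*2^(j+1)))/2 := by
      rw [pow_succ]
      field_simp
    rw [heq] at hcs
    linarith
  have hb2 : ∑' j : ℕ, ∑' u : ℕ,
      (if n*2^j < u ∧ u ≤ n*2^(j+1) then ENNReal.ofReal (ω (1/(u:ℝ))/(u:ℝ)) else 0)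
      ≤ ENNReal.ofReal (C₀ * ω (1/(n:ℝ))) := by
    rw [ENNReal.tsum_comm]
    have hpt2 : ∀ u : ℕ, (∑' j : ℕ,
        (if n*2^j < u ∧ u ≤ n*2^(j+1) then ENNReal.ofReal (ω (1/(u:ℝ))/(u:ℝ)) else 0))
        ≤ (if n < u then ENNReal.ofReal (ω (1/(u:ℝ))/(u:ℝ)) else 0) := by
      intro u
      by_cases hu : n < u
      · obtain ⟨j₀, hj₀, hun⟩ := my_dyadic n hn1 hu
        rw [tsum_eq_single j₀ (fun j' hj' => if_neg (fun hcc => hj' (hun j' hcc))),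
          if_pos hj₀, if_pos hu]
      · have hz : ∀ j : ℕ,
            (if n*2^j < u ∧ u ≤ n*2^(j+1) then ENNReal.ofReal (ω (1/(u:ℝ))/(u:ℝ)) else 0) = 0 :=
          fun j => if_neg (fun hcc => hu (lt_of_le_of_lt
            (Nat.le_mul_of_pos_right n (by positivity)) hcc.1))
        rw [tsum_congr hz, tsum_zero, if_neg hu]
    refine le_trans (ENNReal.tsum_le_tsum hpt2) ?_
    have hshift := Summable.sum_add_tsum_nat_add'
      (f := fun u : ℕ => if n < u then ENNReal.ofReal (ω (1/(u:ℝ))/(u:ℝ)) else 0)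
      (k := n+1) ENNReal.summable
    have hzero : (∑ i ∈ Finset.range (n+1),
        (if n < i then ENNReal.ofReal (ω (1/(i:ℝ))/(i:ℝ)) else 0)) = 0 :=
      Finset.sum_eq_zero fun i hi => if_neg (by have := Finset.mem_range.1 hi; omega)
    have hmatch : ∀ i : ℕ,
        (if n < i + (n+1) then ENNReal.ofReal (ω (1/((i + (n+1) : ℕ):ℝ))/((i + (n+1) : ℕ):ℝ)) else 0)
        = ENNReal.ofReal (ω (1 / ((n:ℝ) + 1 + (i:ℝ))) / ((n:ℝ) + 1 + (i:ℝ))) := by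
      intro i
      rw [if_pos (by omega)]
      have hc2 : ((i + (n+1) : ℕ):ℝ) = (n:ℝ) + 1 + (i:ℝ) := by push_cast; ring
      rw [hc2]
    rw [← hshift, hzero, zero_add, tsum_congr hmatch]
    exact hBn
  have hBsum : ∑' j : ℕ, ENNReal.ofReal (ω (1/((n:ℝ)*2^(j+1))))
      ≤ 2 * ENNReal.ofReal (C₀ * ω (1/(n:ℝ))) := by
    calc ∑' j : ℕ, ENNReal.ofReal (ω (1/((n:ℝ)*2^(j+1))))
        ≤ ∑' j : ℕ, 2 * ∑' u : ℕ,
            (if n*2^j < u ∧ u ≤ n*2^(j+1) then ENNReal.ofReal (ω (1/(u:ℝ))/(u:ℝ)) else 0) :=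
          ENNReal.tsum_le_tsum hA
      _ = 2 * ∑' j : ℕ, ∑' u : ℕ,
            (if n*2^j < u ∧ u ≤ n*2^(j+1) then ENNReal.ofReal (ω (1/(u:ℝ))/(u:ℝ)) else 0) :=
          ENNReal.tsum_mul_left
      _ ≤ 2 * ENNReal.ofReal (C₀ * ω (1/(n:ℝ))) := mul_le_mul_right hb2 _
  exact hBsum


set_option maxHeartbeats 3000000 in
theorem stmt_11
    {d : ℕ} (hd : 1 ≤ d) {p : ℝ} (hp : 1 ≤ p)
    (f : (Fin d → ℝ) → ℂ)
    (hper : ∀ (x : Fin d → ℝ) (j : Fin d), f (Function.update x j (x j + 2 * Real.pi)) = f x)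
    (hint : IntegrableOn f (Set.Icc (0 : Fin d → ℝ) (fun _ => 2 * Real.pi)))
    (ω : ℝ → ℝ)
    (hωc : ContinuousOn ω (Set.Icc 0 1)) (hωm : MonotoneOn ω (Set.Icc 0 1))
    (hω0 : ω 0 = 0) (hωpos : ∀ t ∈ Set.Ioc (0:ℝ) 1, 0 < ω t)
    (hB : ∃ C₀ > (0:ℝ), ∃ N₀ : ℕ, 1 ≤ N₀ ∧ ∀ n : ℕ, N₀ ≤ n →
      (∑' v : ℕ, ENNReal.ofReal (ω (1 / ((n : ℝ) + 1 + (v : ℝ))) / ((n : ℝ) + 1 + (v : ℝ))))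
        ≤ ENNReal.ofReal (C₀ * ω (1 / (n : ℝ))))
    {s : ℝ} (hs : 1 ≤ s)
    (hY : ∀ k : Fin d → ℤ, ¬ ((∀ j, 0 ≤ k j) ∨ (∀ j, k j < 0)) → fCoeff f k = 0)
    (hD :
      ∃ C > (0:ℝ), ∃ δ > (0:ℝ), ∀ h : ℝ, 0 < |h| → |h| < δ →
      (∑' k : Fin d → ℤ, if 1 ≤ norm1 k then
          ENNReal.ofReal ((((norm1 k : ℝ) ^ (s - 1)) * ‖fCoeff f k‖ * ‖1 - Complex.exp (Complex.I * (h : ℂ) * (diagSum k : ℂ))‖) ^ p) else 0) ^ (1/p)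
        ≤ ENNReal.ofReal (C * ω |h|))
    :
    ∃ C > (0:ℝ), ∃ δ : ℝ, 0 < δ ∧ δ < 1 ∧ ∀ ρ : ℝ, 1 - δ < ρ → ρ < 1 →
      (∑' k : Fin d → ℤ, if 1 ≤ norm1 k then
          ENNReal.ofReal (((1 - ρ ^ ((norm1 k : ℝ) ^ s)) * ‖fCoeff f k‖) ^ p) else 0) ^ (1/p)
        ≤ ENNReal.ofReal (C * ω (1 - ρ)) := by
  classical
  obtain ⟨C₀, hC₀, N₀, hN₀1, hBn⟩ := hB
  obtain ⟨C, hC, δD, hδD, hDb⟩ := hD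
  have hp0 : 0 < p := lt_of_lt_of_le one_pos hp
  have hip0 : 0 < 1/p := by positivity
  have hip1 : 1/p ≤ 1 := by rw [div_le_one hp0]; exact hp
  have hω' : ∀ a b : ℝ, 0 ≤ a → a ≤ b → b ≤ 1 → ω a ≤ ω b := fun a b ha hab hb1 =>
    hωm ⟨ha, hab.trans hb1⟩ ⟨ha.trans hab, hb1⟩ hab
  have hωnn : ∀ t : ℝ, 0 ≤ t → t ≤ 1 → 0 ≤ ω t := fun t h0 h1 => hω0 ▸ hω' 0 t le_rfl h0 h1
  refine ⟨16*C + 2*C*C₀, by positivity, min (min (1/2) δD) (1/((N₀:ℝ)+1)),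
    lt_min (lt_min (by norm_num) hδD) (by positivity),
    lt_of_le_of_lt ((min_le_left _ _).trans (min_le_left _ _)) (by norm_num), ?_⟩
  intro ρ hρ1 hρ2
  have hε0 : 0 < 1 - ρ := by linarith
  have hεδ : 1 - ρ < min (min (1/2) δD) (1/((N₀:ℝ)+1)) := by linarith
  have hεhalf : 1 - ρ ≤ 1/2 := hεδ.le.trans ((min_le_left _ _).trans (min_le_left _ _))
  have hεδD : 1 - ρ < δD := lt_of_lt_of_le hεδ ((min_le_left _ _).trans (min_le_right _ _))
  have hεN : (N₀:ℝ)*(1-ρ) ≤ 1 := by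
    have h1 : 1 - ρ ≤ 1/((N₀:ℝ)+1) := hεδ.le.trans (min_le_right _ _)
    have h2 : (0:ℝ) < (N₀:ℝ)+1 := by positivity
    rw [le_div_iff₀ h2] at h1
    nlinarith [hε0]
  have hρ0 : 0 ≤ ρ := by linarith
  obtain ⟨n, hndef⟩ : ∃ m : ℕ, m = N₀ + ⌈2/(1-ρ)⌉₊ := ⟨_, rfl⟩
  have hnN : N₀ ≤ n := by rw [hndef]; exact Nat.le_add_right _ _
  have hn1 : 1 ≤ n := le_trans hN₀1 hnN
  have hn0R : (0:ℝ) < (n:ℝ) := by exact_mod_cast Nat.lt_of_lt_of_le Nat.zero_lt_one hn1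
  have hge : 2/(1-ρ) ≤ (n:ℝ) := by
    have h1 := Nat.le_ceil (2/(1-ρ))
    have h2 : ((⌈2/(1-ρ)⌉₊ : ℕ):ℝ) ≤ (n:ℝ) := by rw [hndef]; exact_mod_cast Nat.le_add_left _ _
    linarith
  have h2εn : 2 ≤ (n:ℝ)*(1-ρ) := by rw [div_le_iff₀ hε0] at hge; linarith
  have hninv : 1/(n:ℝ) ≤ (1-ρ)/2 := by rw [div_le_div_iff₀ hn0R (by norm_num)]; linarith
  have hnε4 : (n:ℝ)*(1-ρ) ≤ 4 := by
    have hceil : (⌈2/(1-ρ)⌉₊:ℝ) < 2/(1-ρ) + 1 := Nat.ceil_lt_add_one (by positivity)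
    have hcast : (n:ℝ) = (N₀:ℝ) + (⌈2/(1-ρ)⌉₊:ℝ) := by rw [hndef]; push_cast; ring
    have h2 : (2/(1-ρ))*(1-ρ) = 2 := by field_simp
    nlinarith [hεhalf, hε0]
  clear hndef
  set G : (Fin d → ℤ) → ℝ≥0∞ := fun k =>
    ENNReal.ofReal (((1 - ρ ^ ((norm1 k : ℝ) ^ s)) * ‖fCoeff f k‖) ^ p) with hG
  have hε1 : 1 - ρ ≤ 1 := by linarith
  have hωε : 0 ≤ ω (1 - ρ) := hωnn _ hε0.le hε1
  have hmain : (∑' k : Fin d → ℤ, (if 1 ≤ norm1 k ∧ norm1 k ≤ 4*n then G k else 0))^(1/p)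
      ≤ ENNReal.ofReal (16*C*ω (1-ρ)) := by
    set h₀ : ℝ := π/(8*(n:ℝ)) with hh₀
    have hπ4 := Real.pi_le_four
    have hπ0 := Real.pi_pos
    have h₀pos : 0 < h₀ := by rw [hh₀]; positivity
    have h₀le : h₀ ≤ (1-ρ)/4 := by
      have ha : π/(8*(n:ℝ)) ≤ 4/(8*(n:ℝ)) := by gcongr
      have hb : (4:ℝ)/(8*(n:ℝ)) = (1/(n:ℝ))/2 := by ring
      rw [hh₀]; linarith [hninv]
    have h₀abs : |h₀| = h₀ := abs_of_pos h₀pos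
    have hDm := hDb h₀ (by rw [h₀abs]; exact h₀pos) (by rw [h₀abs]; linarith [hεδD, hε0])
    set DS : ℝ≥0∞ := ∑' k : Fin d → ℤ, (if 1 ≤ norm1 k then
        ENNReal.ofReal ((((norm1 k : ℝ) ^ (s - 1)) * ‖fCoeff f k‖ *
          ‖1 - Complex.exp (Complex.I * (h₀ : ℂ) * (diagSum k : ℂ))‖) ^ p) else 0)
      with hDS
    have hpt : ∀ k : Fin d → ℤ, (if 1 ≤ norm1 k ∧ norm1 k ≤ 4*n then G k else 0) ≤
        ENNReal.ofReal ((16:ℝ)^p) * (if 1 ≤ norm1 k then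
          ENNReal.ofReal ((((norm1 k : ℝ) ^ (s - 1)) * ‖fCoeff f k‖ *
            ‖1 - Complex.exp (Complex.I * (h₀ : ℂ) * (diagSum k : ℂ))‖) ^ p) else 0) := by
      intro k
      by_cases hc : 1 ≤ norm1 k ∧ norm1 k ≤ 4*n
      · rw [if_pos hc, if_pos hc.1]
        simp only [hG]
        have hm1R : (1:ℝ) ≤ (norm1 k : ℝ) := by exact_mod_cast hc.1
        have hmpos : (0:ℝ) < (norm1 k : ℝ) := by linarith
        have hm4n : (norm1 k : ℝ) ≤ 4*(n:ℝ) := by exact_mod_cast hc.2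
        have hθ0 : 0 ≤ h₀ * (norm1 k : ℝ) := by positivity
        have hθ1 : h₀ * (norm1 k : ℝ) ≤ π/2 := by
          have h1 : h₀ * (norm1 k : ℝ) ≤ h₀ * (4*(n:ℝ)) := by gcongr
          have h2 : h₀ * (4*(n:ℝ)) = π/2 := by rw [hh₀]; field_simp; ring
          linarith
        have hsin := Real.mul_le_sin hθ0 hθ1
        have hsin' : (norm1 k : ℝ)/(4*(n:ℝ)) ≤ |Real.sin (h₀ * (norm1 k : ℝ))| := by
          have heq : 2/π * (h₀ * (norm1 k : ℝ)) = (norm1 k : ℝ)/(4*(n:ℝ)) := by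
            rw [hh₀]; field_simp; ring
          rw [← heq]; exact hsin.trans (le_abs_self _)
        have hms : ((norm1 k : ℝ))^(s-1) * (norm1 k : ℝ) = ((norm1 k : ℝ))^s := by
          have h2 := Real.rpow_add hmpos (s-1) 1
          rw [Real.rpow_one] at h2
          rw [← h2]; norm_num
        have ha1 : 1 ≤ ((norm1 k : ℝ))^s := Real.one_le_rpow hm1R (by linarith)
        have hbern : 1 - ρ^(((norm1 k : ℝ))^s) ≤ ((norm1 k : ℝ))^s * (1-ρ) := by
          have hh := one_add_mul_self_le_rpow_one_add (s := ρ - 1) (by linarith) ha1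
          rw [show (1:ℝ) + (ρ-1) = ρ by ring] at hh
          have : ((norm1 k : ℝ))^s * (ρ - 1) = -(((norm1 k : ℝ))^s * (1-ρ)) := by ring
          linarith
        have hεn : 1 - ρ ≤ 4/(n:ℝ) := by rw [le_div_iff₀ hn0R]; linarith [hnε4]
        have hscal : 1 - ρ^(((norm1 k : ℝ))^s) ≤
            16 * (((norm1 k : ℝ))^(s-1) * |Real.sin (h₀ * (norm1 k : ℝ))|) := by
          have hr : (0:ℝ) ≤ ((norm1 k : ℝ))^(s-1) := Real.rpow_nonneg hmpos.le _
          have h3 : ((norm1 k : ℝ))^s * (1-ρ) ≤ ((norm1 k : ℝ))^s * (4/(n:ℝ)) := by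
            gcongr
          have h4 : ((norm1 k : ℝ))^s * (4/(n:ℝ)) =
              16 * (((norm1 k : ℝ))^(s-1) * ((norm1 k : ℝ)/(4*(n:ℝ)))) := by
            rw [← hms]; field_simp; ring
          have h5 : 16 * (((norm1 k : ℝ))^(s-1) * ((norm1 k : ℝ)/(4*(n:ℝ)))) ≤
              16 * (((norm1 k : ℝ))^(s-1) * |Real.sin (h₀ * (norm1 k : ℝ))|) := by
            gcongr
          linarith [hbern]
        have hkey := my_key hY k h₀ (1 - ρ^(((norm1 k : ℝ))^s)) 16 (by norm_num) (Or.inl hscal)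
        have hx0 : 0 ≤ 1 - ρ^(((norm1 k : ℝ))^s) := by
          have h6 : ρ^(((norm1 k : ℝ))^s) ≤ 1 := Real.rpow_le_one hρ0 hρ2.le (by linarith)
          linarith
        have hD0 : 0 ≤ ((norm1 k : ℝ))^(s-1) * ‖fCoeff f k‖ *
            ‖1 - Complex.exp (Complex.I * (h₀:ℂ) * (diagSum k : ℂ))‖ :=
          mul_nonneg (mul_nonneg (Real.rpow_nonneg hmpos.le _) (norm_nonneg _))
            (norm_nonneg _)
        rw [← ENNReal.ofReal_mul (by positivity : (0:ℝ) ≤ (16:ℝ)^p)]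
        apply ENNReal.ofReal_le_ofReal
        rw [← Real.mul_rpow (by norm_num) hD0]
        exact Real.rpow_le_rpow (mul_nonneg hx0 (norm_nonneg _)) hkey hp0.le
      · rw [if_neg hc]; exact zero_le
    have hsum : (∑' k : Fin d → ℤ, (if 1 ≤ norm1 k ∧ norm1 k ≤ 4*n then G k else 0))
        ≤ ENNReal.ofReal ((16:ℝ)^p) * DS := by
      rw [hDS, ← ENNReal.tsum_mul_left]
      exact ENNReal.tsum_le_tsum hpt
    have h16 : (ENNReal.ofReal ((16:ℝ)^p))^(1/p) = ENNReal.ofReal 16 := by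
      rw [← ENNReal.ofReal_rpow_of_pos (by norm_num : (0:ℝ) < 16), ← ENNReal.rpow_mul,
        mul_one_div_cancel hp0.ne', ENNReal.rpow_one]
    calc (∑' k : Fin d → ℤ, (if 1 ≤ norm1 k ∧ norm1 k ≤ 4*n then G k else 0))^(1/p)
        ≤ (ENNReal.ofReal ((16:ℝ)^p) * DS)^(1/p) := ENNReal.rpow_le_rpow hsum hip0.le
      _ = (ENNReal.ofReal ((16:ℝ)^p))^(1/p) * DS^(1/p) := ENNReal.mul_rpow_of_nonneg _ _ hip0.le
      _ ≤ (ENNReal.ofReal ((16:ℝ)^p))^(1/p) * ENNReal.ofReal (C * ω |h₀|) :=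
          mul_le_mul_right hDm _
      _ = ENNReal.ofReal (16 * (C * ω |h₀|)) := by
          rw [h16, ← ENNReal.ofReal_mul (by norm_num)]
      _ ≤ ENNReal.ofReal (16*C*ω (1-ρ)) := by
          apply ENNReal.ofReal_le_ofReal
          have hω1 : ω |h₀| ≤ ω (1-ρ) := by
            rw [h₀abs]; exact hω' h₀ (1-ρ) h₀pos.le (by linarith) hε1
          have hω2 := mul_le_mul_of_nonneg_left hω1 hC.le
          linarith
  have htail : (∑' k : Fin d → ℤ, (if 4*n < norm1 k then G k else 0))^(1/p)
      ≤ ENNReal.ofReal (2*C*C₀*ω (1-ρ)) := by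
    have hπ4 := Real.pi_le_four
    have hπ0 := Real.pi_pos
    have hblock : ∀ j : ℕ,
        (∑' k : Fin d → ℤ, (if 4*n*2^j < norm1 k ∧ norm1 k ≤ 4*n*2^(j+1) then G k else 0))^(1/p)
          ≤ ENNReal.ofReal (C * ω (1/((n:ℝ)*2^(j+1)))) := by
      intro j
      set Hj : ℝ := π/(4*(n:ℝ)*2^(j+1)) with hHj
      have h2p1 : (1:ℝ) ≤ 2^(j+1) := one_le_pow₀ (by norm_num)
      have h2p2 : (2:ℝ) ≤ 2^(j+1) := by
        calc (2:ℝ) = 2^1 := (pow_one 2).symm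
        _ ≤ 2^(j+1) := pow_le_pow_right₀ (by norm_num) (by omega)
      have hHjpos : 0 < Hj := by rw [hHj]; positivity
      have hX0 : (0:ℝ) < (n:ℝ)*2^(j+1) := by positivity
      have hHjle : Hj ≤ 1/((n:ℝ)*2^(j+1)) := by
        rw [hHj, div_le_div_iff₀ (by positivity) hX0]
        have h1 := mul_le_mul_of_nonneg_right hπ4 hX0.le
        have h2 : (4:ℝ)*((n:ℝ)*2^(j+1)) = 1*(4*(n:ℝ)*2^(j+1)) := by ring
        linarith
      have hXle1 : 1/((n:ℝ)*2^(j+1)) ≤ 1/(2*(n:ℝ)) := by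
        apply one_div_le_one_div_of_le (by positivity)
        have := mul_le_mul_of_nonneg_left h2p2 hn0R.le
        linarith
      have hHjε : Hj ≤ (1-ρ)/4 := by
        have : 1/(2*(n:ℝ)) = (1/(n:ℝ))/2 := by ring
        linarith [hninv, hHjle, hXle1]
      have hHjabs : |Hj| = Hj := abs_of_pos hHjpos
      have hDj := hDb Hj (by rw [hHjabs]; exact hHjpos) (by rw [hHjabs]; linarith [hεδD, hε0])
      have hpt : ∀ k : Fin d → ℤ,
          (if 4*n*2^j < norm1 k ∧ norm1 k ≤ 4*n*2^(j+1) then G k else 0) ≤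
          (if 1 ≤ norm1 k then
            ENNReal.ofReal ((((norm1 k : ℝ) ^ (s - 1)) * ‖fCoeff f k‖ *
              ‖1 - Complex.exp (Complex.I * (Hj : ℂ) * (diagSum k : ℂ))‖) ^ p) else 0) := by
        intro k
        by_cases hc : 4*n*2^j < norm1 k ∧ norm1 k ≤ 4*n*2^(j+1)
        · have hposj : 0 < 4*n*2^j := by positivity
          have hm1 : 1 ≤ norm1 k := by omega
          rw [if_pos hc, if_pos hm1]
          simp only [hG]
          have hm1R : (1:ℝ) ≤ (norm1 k : ℝ) := by exact_mod_cast hm1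
          have hmpos : (0:ℝ) < (norm1 k : ℝ) := by linarith
          have hmlb : 4*(n:ℝ)*2^j < (norm1 k : ℝ) := by exact_mod_cast hc.1
          have hmub : (norm1 k : ℝ) ≤ 4*(n:ℝ)*2^(j+1) := by exact_mod_cast hc.2
          have hne : (4*(n:ℝ)*2^(j+1)) ≠ 0 := by positivity
          have hθlb : π/2 ≤ Hj * (norm1 k : ℝ) := by
            have h1 := mul_le_mul_of_nonneg_left hmlb.le hHjpos.le
            have heq2 : Hj * (4*(n:ℝ)*2^j) = π/2 := by
              rw [hHj, pow_succ]; field_simp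
            linarith
          have hθub : Hj * (norm1 k : ℝ) ≤ π + π/2 := by
            have h1 := mul_le_mul_of_nonneg_left hmub hHjpos.le
            have heq3 : Hj * (4*(n:ℝ)*2^(j+1)) = π := by
              rw [hHj]; field_simp
            linarith
          have hcos := Real.cos_nonpos_of_pi_div_two_le_of_le hθlb hθub
          have hms1 : 1 ≤ ((norm1 k : ℝ))^(s-1) := Real.one_le_rpow hm1R (by linarith)
          have ha0 : (0:ℝ) ≤ ((norm1 k : ℝ))^s := Real.rpow_nonneg hmpos.le _
          have hx0 : 0 ≤ 1 - ρ^(((norm1 k : ℝ))^s) := by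
            have h6 : ρ^(((norm1 k : ℝ))^s) ≤ 1 := Real.rpow_le_one hρ0 hρ2.le ha0
            linarith
          have hx1 : 1 - ρ^(((norm1 k : ℝ))^s) ≤ 1 :=
            by linarith [Real.rpow_nonneg hρ0 (((norm1 k : ℝ))^s)]
          have h7 : (1:ℝ) ≤ 1 - Real.cos (Hj * (norm1 k : ℝ)) := by linarith
          have h8 : (1:ℝ)*1 ≤ ((norm1 k : ℝ))^(s-1) * (1 - Real.cos (Hj * (norm1 k : ℝ))) :=
            mul_le_mul hms1 h7 (by norm_num) (by linarith)
          have hscal : 1 - ρ^(((norm1 k : ℝ))^s) ≤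
              1 * (((norm1 k : ℝ))^(s-1) * (1 - Real.cos (Hj * (norm1 k : ℝ)))) := by
            rw [one_mul]; linarith
          have hkey := my_key hY k Hj (1 - ρ^(((norm1 k : ℝ))^s)) 1 (by norm_num) (Or.inr hscal)
          rw [one_mul] at hkey
          exact ENNReal.ofReal_le_ofReal
            (Real.rpow_le_rpow (mul_nonneg hx0 (norm_nonneg _)) hkey hp0.le)
        · rw [if_neg hc]; exact zero_le
      have hωHj : ω |Hj| ≤ ω (1/((n:ℝ)*2^(j+1))) := by
        rw [hHjabs]
        refine hω' _ _ hHjpos.le hHjle ?_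
        rw [div_le_one hX0]
        have h1 := mul_le_mul_of_nonneg_left h2p1 hn0R.le
        have h2 : (1:ℝ) ≤ (n:ℝ) := by exact_mod_cast hn1
        nlinarith
      calc (∑' k : Fin d → ℤ, (if 4*n*2^j < norm1 k ∧ norm1 k ≤ 4*n*2^(j+1) then G k else 0))^(1/p)
          ≤ (∑' k : Fin d → ℤ, (if 1 ≤ norm1 k then
              ENNReal.ofReal ((((norm1 k : ℝ) ^ (s - 1)) * ‖fCoeff f k‖ *
                ‖1 - Complex.exp (Complex.I * (Hj : ℂ) * (diagSum k : ℂ))‖) ^ p) else 0))^(1/p) :=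
            ENNReal.rpow_le_rpow (ENNReal.tsum_le_tsum hpt) hip0.le
        _ ≤ ENNReal.ofReal (C * ω |Hj|) := hDj
        _ ≤ ENNReal.ofReal (C * ω (1/((n:ℝ)*2^(j+1)))) := by
            apply ENNReal.ofReal_le_ofReal
            have := mul_le_mul_of_nonneg_left hωHj hC.le
            linarith
    have hBsum : ∑' j : ℕ, ENNReal.ofReal (ω (1/((n:ℝ)*2^(j+1))))
        ≤ 2 * ENNReal.ofReal (C₀ * ω (1/(n:ℝ))) := my_Bsum ω hω' hωnn hn1 (hBn n hnN)
    have hω3 : ω (1/(n:ℝ)) ≤ ω (1-ρ) := by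
      refine hω' _ _ (by positivity) ?_ hε1
      linarith [hninv, hε0]
    have hω4 : 0 ≤ ω (1/(n:ℝ)) := by
      refine hωnn _ (by positivity) ?_
      rw [div_le_one hn0R]
      exact_mod_cast hn1
    have hfinal : ∑' j : ℕ, ENNReal.ofReal (C * ω (1/((n:ℝ)*2^(j+1))))
        ≤ ENNReal.ofReal (2*C*C₀*ω (1-ρ)) := by
      calc ∑' j : ℕ, ENNReal.ofReal (C * ω (1/((n:ℝ)*2^(j+1))))
          = ENNReal.ofReal C * ∑' j : ℕ, ENNReal.ofReal (ω (1/((n:ℝ)*2^(j+1)))) := by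
            rw [← ENNReal.tsum_mul_left]
            exact tsum_congr fun j => ENNReal.ofReal_mul hC.le
        _ ≤ ENNReal.ofReal C * (2 * ENNReal.ofReal (C₀ * ω (1/(n:ℝ)))) := mul_le_mul_right hBsum _
        _ = ENNReal.ofReal (C * (2 * (C₀ * ω (1/(n:ℝ))))) := by
            rw [show (2:ℝ≥0∞) = ENNReal.ofReal 2 from (ENNReal.ofReal_ofNat 2).symm,
              ← ENNReal.ofReal_mul (by norm_num), ← ENNReal.ofReal_mul hC.le]
        _ ≤ ENNReal.ofReal (2*C*C₀*ω (1-ρ)) := by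
            apply ENNReal.ofReal_le_ofReal
            have h1 := mul_le_mul_of_nonneg_left hω3 (by positivity : (0:ℝ) ≤ 2*C*C₀)
            nlinarith [hC₀, hC]
    have hpart : ∀ k : Fin d → ℤ, (if 4*n < norm1 k then G k else 0)
        = ∑' j : ℕ, (if 4*n*2^j < norm1 k ∧ norm1 k ≤ 4*n*2^(j+1) then G k else 0) := by
      intro k
      by_cases hm : 4*n < norm1 k
      · obtain ⟨j₀, hj₀, hun⟩ := my_dyadic (4*n) (by omega) hm
        rw [if_pos hm, tsum_eq_single j₀ (fun j' hj' => if_neg (fun hcc => hj' (hun j' hcc))),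
          if_pos hj₀]
      · have hz : ∀ j : ℕ,
            (if 4*n*2^j < norm1 k ∧ norm1 k ≤ 4*n*2^(j+1) then G k else 0) = 0 := by
          intro j
          apply if_neg
          intro hcc
          have h2 : 4*n ≤ 4*n*2^j := Nat.le_mul_of_pos_right _ (by positivity)
          omega
        rw [if_neg hm, tsum_congr hz, tsum_zero]
    calc (∑' k : Fin d → ℤ, (if 4*n < norm1 k then G k else 0))^(1/p)
        = (∑' j : ℕ, ∑' k : Fin d → ℤ,
            (if 4*n*2^j < norm1 k ∧ norm1 k ≤ 4*n*2^(j+1) then G k else 0))^(1/p) := by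
          rw [tsum_congr hpart, ENNReal.tsum_comm]
      _ ≤ ∑' j : ℕ, (∑' k : Fin d → ℤ,
            (if 4*n*2^j < norm1 k ∧ norm1 k ≤ 4*n*2^(j+1) then G k else 0))^(1/p) :=
          my_tsum_rpow_le _ hip0 hip1
      _ ≤ ∑' j : ℕ, ENNReal.ofReal (C * ω (1/((n:ℝ)*2^(j+1)))) := ENNReal.tsum_le_tsum hblock
      _ ≤ ENNReal.ofReal (2*C*C₀*ω (1-ρ)) := hfinal
  have hgoal : ∀ k : Fin d → ℤ,
      (if 1 ≤ norm1 k then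
        ENNReal.ofReal (((1 - ρ ^ ((norm1 k : ℝ) ^ s)) * ‖fCoeff f k‖) ^ p) else 0)
      = (if 1 ≤ norm1 k ∧ norm1 k ≤ 4*n then G k else 0) + (if 4*n < norm1 k then G k else 0) := by
    intro k
    simp only [hG]
    by_cases h1 : 1 ≤ norm1 k
    · by_cases h2 : norm1 k ≤ 4*n
      · rw [if_pos h1, if_pos ⟨h1, h2⟩, if_neg (by omega), add_zero]
      · rw [if_pos h1, if_neg (fun hc => h2 hc.2), if_pos (by omega), zero_add]
    · rw [if_neg h1, if_neg (fun hc => h1 hc.1), if_neg (by omega), add_zero]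
  calc (∑' k : Fin d → ℤ, if 1 ≤ norm1 k then
          ENNReal.ofReal (((1 - ρ ^ ((norm1 k : ℝ) ^ s)) * ‖fCoeff f k‖) ^ p) else 0) ^ (1/p)
      = ((∑' k : Fin d → ℤ, (if 1 ≤ norm1 k ∧ norm1 k ≤ 4*n then G k else 0))
          + (∑' k : Fin d → ℤ, (if 4*n < norm1 k then G k else 0)))^(1/p) := by
        rw [tsum_congr hgoal, ENNReal.tsum_add]
    _ ≤ (∑' k : Fin d → ℤ, (if 1 ≤ norm1 k ∧ norm1 k ≤ 4*n then G k else 0))^(1/p)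
          + (∑' k : Fin d → ℤ, (if 4*n < norm1 k then G k else 0))^(1/p) :=
        ENNReal.rpow_add_le_add_rpow _ _ hip0.le hip1
    _ ≤ ENNReal.ofReal (16*C*ω (1-ρ)) + ENNReal.ofReal (2*C*C₀*ω (1-ρ)) := add_le_add hmain htail
    _ = ENNReal.ofReal ((16*C + 2*C*C₀) * ω (1-ρ)) := by
        rw [← ENNReal.ofReal_add (by positivity) (by positivity)]
        ring_nf
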